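/- arXiv:1611.05804 — 7 statements merged into one kernel-verified Lean document; each statement's English description precedes it below -/
import Mathlib

section
/- The square roots of distinct prime numbers are linearly independent over the rational numbers: if p_1 < p_2 < ⋯ < p_n are distinct primes and q_0, q_1, …, q_n ∈ ℚ satisfy q_0 + q_1√p_1 + ⋯ + q_n√p_n = 0, then all q_i = 0. -/
open IntermediateField

/-- Quadratic representation: elements of `adjoin ℚ (insert r S)` are `a + b*r`
with `a b ∈ adjoin ℚ S`, provided `r*r ∈ adjoin ℚ S` and `r ∉ adjoin ℚ S`. -/
lemma quad_rep (S : Set ℝ) (r : ℝ)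
    (hr2 : r * r ∈ IntermediateField.adjoin ℚ S)
    (hr : r ∉ IntermediateField.adjoin ℚ S) {x : ℝ}
    (hx : x ∈ IntermediateField.adjoin ℚ (insert r S)) :
    ∃ a ∈ IntermediateField.adjoin ℚ S, ∃ b ∈ IntermediateField.adjoin ℚ S,
      x = a + b * r := by
  set F := IntermediateField.adjoin ℚ S with hF
  induction hx using IntermediateField.adjoin_induction with
  | mem x hxS => ?_
  | algebraMap q => ?_
  | add x y hx hy ihx ihy => ?_
  | inv x hx ihx => ?_
  | mul x y hx hy ihx ihy => ?_
  case mem =>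
    rcases hxS with rfl | hxS
    · exact ⟨0, zero_mem F, 1, one_mem F, by ring⟩
    · exact ⟨x, IntermediateField.subset_adjoin ℚ S hxS, 0, zero_mem F, by ring⟩
  case algebraMap =>
    exact ⟨algebraMap ℚ ℝ q, IntermediateField.algebraMap_mem F q, 0, zero_mem F, by ring⟩
  case add =>
    obtain ⟨a, ha, b, hb, rfl⟩ := ihx
    obtain ⟨c, hc, d, hd, rfl⟩ := ihy
    exact ⟨a + c, add_mem ha hc, b + d, add_mem hb hd, by ring⟩
  case inv =>
    obtain ⟨a, ha, b, hb, rfl⟩ := ihx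
    by_cases hx0 : a + b * r = 0
    · exact ⟨0, zero_mem F, 0, zero_mem F, by rw [hx0]; simp⟩
    have hN : a * a - b * b * (r * r) ≠ 0 := by
      intro hN0
      by_cases hb0 : b = 0
      · apply hx0
        have : a * a = 0 := by rw [hb0] at hN0; linarith
        have ha0 : a = 0 := by nlinarith
        rw [ha0, hb0]; ring
      · have hrr : r * r = (a / b) * (a / b) := by field_simp; nlinarith
        have : r = a / b ∨ r = -(a / b) := by
          rcases mul_self_eq_mul_self_iff.mp hrr with h1 | h1
          · exact Or.inl h1
          · exact Or.inr h1
        rcases this with h1 | h1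
        · exact hr (h1 ▸ div_mem ha hb)
        · exact hr (h1 ▸ neg_mem (div_mem ha hb))
    set N := a * a - b * b * (r * r) with hNdef
    have hNF : N ∈ F := sub_mem (mul_mem ha ha) (mul_mem (mul_mem hb hb) hr2)
    refine ⟨a / N, div_mem ha hNF, -(b / N), neg_mem (div_mem hb hNF), ?_⟩
    apply inv_eq_of_mul_eq_one_right
    have : N = a * a - b * b * (r * r) := hNdef
    field_simp
    nlinarith [this]
  case mul =>
    obtain ⟨a, ha, b, hb, rfl⟩ := ihx
    obtain ⟨c, hc, d, hd, rfl⟩ := ihy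
    refine ⟨a * c + b * d * (r * r), add_mem (mul_mem ha hc)
      (mul_mem (mul_mem hb hd) hr2), a * d + b * c,
      add_mem (mul_mem ha hd) (mul_mem hb hc), by ring⟩

/-- For a finite set `s` of primes and a squarefree `m > 1` not divisible by any
prime in `s`, `√m` is not in `ℚ(√p : p ∈ s)`. -/
lemma sqrt_not_mem_adjoin :
    ∀ s : Finset ℕ, (∀ p ∈ s, p.Prime) →
    ∀ m : ℕ, Squarefree m → 1 < m → (∀ p ∈ s, ¬ p ∣ m) →
    Real.sqrt m ∉ IntermediateField.adjoin ℚ ((fun k : ℕ => Real.sqrt k) '' ↑s) := by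
  intro s
  induction s using Finset.induction_on with
  | empty =>
    intro _ m hsf hm _ hmem
    simp only [Finset.coe_empty, Set.image_empty, IntermediateField.adjoin_empty] at hmem
    rw [IntermediateField.mem_bot] at hmem
    obtain ⟨y, hy⟩ := hmem
    have hirr : Irrational (Real.sqrt m) := by
      rw [irrational_sqrt_natCast_iff]
      rintro ⟨k, hk⟩
      have hdvd : k * k ∣ m := ⟨1, by rw [hk]; ring⟩
      have hk1 := Nat.isUnit_iff.mp (hsf k hdvd)
      rw [hk1] at hk
      omega
    exact hirr ⟨y, hy⟩
  | @insert p s hps ih =>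
    intro hprime m hsf hm hcop hmem
    have hpP : p.Prime := hprime p (Finset.mem_insert_self p s)
    have hsP : ∀ q ∈ s, q.Prime := fun q hq => hprime q (Finset.mem_insert_of_mem hq)
    set S : Set ℝ := (fun k : ℕ => Real.sqrt k) '' ↑s with hS
    set F := IntermediateField.adjoin ℚ S with hF
    -- √p ∉ F by IH
    have hrF : Real.sqrt p ∉ F := by
      apply ih hsP p hpP.squarefree hpP.one_lt
      intro q hq hdvd
      rcases (Nat.Prime.eq_one_or_self_of_dvd hpP q hdvd) with h1 | h1
      · exact (hsP q hq).one_lt.ne' h1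
      · exact hps (h1 ▸ hq)
    have hr2 : Real.sqrt p * Real.sqrt p ∈ F := by
      rw [Real.mul_self_sqrt (by positivity)]
      exact_mod_cast IntermediateField.natCast_mem F p
    have himg : (fun k : ℕ => Real.sqrt k) '' ↑(insert p s)
        = insert (Real.sqrt p) S := by
      rw [Finset.coe_insert, Set.image_insert_eq]
    rw [himg] at hmem
    obtain ⟨a, ha, b, hb, hab⟩ := quad_rep S (Real.sqrt p) hr2 hrF hmem
    have hpm : ¬ p ∣ m := hcop p (Finset.mem_insert_self p s)
    have hscop : ∀ q ∈ s, ¬ q ∣ m := fun q hq => hcop q (Finset.mem_insert_of_mem hq)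
    by_cases hb0 : b = 0
    · -- √m = a ∈ F
      apply ih hsP m hsf hm hscop
      rw [hab, hb0]
      simpa using ha
    by_cases ha0 : a = 0
    · -- √m = b √p, so √(m p) = b p ∈ F
      have key : Real.sqrt (m * p : ℕ) = b * p := by
        push_cast
        have h2 : Real.sqrt p * Real.sqrt p = (p : ℝ) := Real.mul_self_sqrt (by positivity)
        rw [Real.sqrt_mul (by positivity), hab, ha0, zero_add, mul_assoc, h2]
      have hcp : Nat.Coprime m p := ((Nat.Prime.coprime_iff_not_dvd hpP).mpr hpm).symm
      apply ih hsP (m * p) ((Nat.squarefree_mul hcp).mpr ⟨hsf, hpP.squarefree⟩)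
        (by nlinarith [hpP.one_lt])
      · intro q hq hdvd
        rcases (hsP q hq).dvd_mul.mp hdvd with h1 | h1
        · exact hscop q hq h1
        · rcases (Nat.Prime.eq_one_or_self_of_dvd hpP q h1) with h2 | h2
          · exact (hsP q hq).one_lt.ne' h2
          · exact hps (h2 ▸ hq)
      · rw [key]
        exact mul_mem hb (by exact_mod_cast IntermediateField.natCast_mem F p)
    · -- both nonzero: √p ∈ F, contradiction
      apply hrF
      have hsq : (m : ℝ) = a * a + b * b * (p : ℝ) + 2 * a * b * Real.sqrt p := by
        have h1 : Real.sqrt m * Real.sqrt m = (m : ℝ) := Real.mul_self_sqrt (by positivity)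
        have h2 : Real.sqrt p * Real.sqrt p = (p : ℝ) := Real.mul_self_sqrt (by positivity)
        rw [hab] at h1
        linear_combination -h1 + b * b * h2
      have : Real.sqrt p = ((m : ℝ) - a * a - b * b * (p : ℝ)) / (2 * a * b) := by
        rw [hsq]; field_simp; ring
      rw [this]
      exact div_mem (sub_mem (sub_mem (by exact_mod_cast IntermediateField.natCast_mem F m) (mul_mem ha ha))
        (mul_mem (mul_mem hb hb) (by exact_mod_cast IntermediateField.natCast_mem F p)))
        (mul_mem (mul_mem (by exact_mod_cast IntermediateField.natCast_mem F 2) ha) hb)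

/-- Square roots of distinct primes are linearly independent over `ℚ`:
if `q₀ + q₁√p₁ + ⋯ + qₙ√pₙ = 0` with the `pᵢ` distinct primes and `qᵢ ∈ ℚ`,
then all `qᵢ = 0`. -/
theorem sqrt_primes_rat_linearIndependent (n : ℕ) (p : Fin n → ℕ)
    (hp : ∀ i, (p i).Prime) (hinj : Function.Injective p)
    (q₀ : ℚ) (q : Fin n → ℚ)
    (h : (q₀ : ℝ) + ∑ i, (q i : ℝ) * Real.sqrt (p i) = 0) :
    q₀ = 0 ∧ ∀ i, q i = 0 := by
  have key : ∀ j, q j = 0 := by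
    intro j
    by_contra hqj
    set s : Finset ℕ := (Finset.univ.erase j).image p with hs
    have hsP : ∀ k ∈ s, k.Prime := by
      intro k hk
      obtain ⟨i, _, rfl⟩ := Finset.mem_image.mp hk
      exact hp i
    set K := IntermediateField.adjoin ℚ ((fun k : ℕ => Real.sqrt k) '' ↑s) with hK
    have hsum : ∑ i ∈ Finset.univ.erase j, (q i : ℝ) * Real.sqrt (p i)
        + (q j : ℝ) * Real.sqrt (p j) = ∑ i, (q i : ℝ) * Real.sqrt (p i) :=
      Finset.sum_erase_add _ _ (Finset.mem_univ j)
    have heq : Real.sqrt (p j)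
        = (-(q₀ : ℝ) - ∑ i ∈ Finset.univ.erase j, (q i : ℝ) * Real.sqrt (p i))
          / (q j : ℝ) := by
      have hqj' : (q j : ℝ) ≠ 0 := by exact_mod_cast hqj
      field_simp
      linarith [hsum, h]
    have hmem : Real.sqrt (p j) ∈ K := by
      rw [heq]
      apply div_mem
      · apply sub_mem
        · exact neg_mem (by exact_mod_cast IntermediateField.algebraMap_mem K q₀)
        · apply sum_mem
          intro i hi
          apply mul_mem
          · exact_mod_cast IntermediateField.algebraMap_mem K (q i)
          · apply IntermediateField.subset_adjoin
            exact ⟨p i, by simpa [hs] using Finset.mem_image.mpr ⟨i, hi, rfl⟩, rfl⟩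
      · exact_mod_cast IntermediateField.algebraMap_mem K (q j)
    apply sqrt_not_mem_adjoin s hsP (p j) (hp j).squarefree (hp j).one_lt ?_ hmem
    intro k hk hdvd
    obtain ⟨i, hi, rfl⟩ := Finset.mem_image.mp hk
    rcases (Nat.Prime.eq_one_or_self_of_dvd (hp j) (p i) hdvd) with h1 | h1
    · exact (hp i).one_lt.ne' h1
    · exact (Finset.mem_erase.mp hi).1 (hinj h1)
  refine ⟨?_, key⟩
  have : ∑ i, (q i : ℝ) * Real.sqrt (p i) = 0 := by
    apply Finset.sum_eq_zero
    intro i _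
    rw [key i]
    simp
  rw [this, add_zero] at h
  exact_mod_cast h
end

section
/- Let G be a locally compact abelian group, H a closed subgroup of the LCA group ℝ^m × G with first and second canonical projections p₁, p₂. If H is discrete and p₂ restricted to H is injective, and S ⊆ ℝ^m and K ⊆ G are compact, then the set Λ = {p₂(h) : h ∈ H, p₁(h) ∈ S} is uniformly discrete in G. -/
open scoped Pointwise


/-- If `H` is a discrete subgroup of `ℝ^m × G` on which the second projection is
injective, and `S ⊆ ℝ^m`, `K ⊆ G` are compact, then
`Λ = {p₂ h : h ∈ H, p₁ h ∈ S}` is uniformly discrete in `G`. -/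
theorem quasicrystal_uniformly_discrete
    {G : Type*} [AddCommGroup G] [TopologicalSpace G] [IsTopologicalAddGroup G]
    [LocallyCompactSpace G] [T2Space G]
    (m : ℕ) (H : AddSubgroup ((Fin m → ℝ) × G)) [DiscreteTopology H]
    (hinj : Set.InjOn (fun x : (Fin m → ℝ) × G => x.2) (H : Set ((Fin m → ℝ) × G)))
    (S : Set (Fin m → ℝ)) (hS : IsCompact S) (K : Set G) (hK : IsCompact K) :
    ∃ U : Set G, IsOpen U ∧ (0 : G) ∈ U ∧
      ∀ x ∈ {g : G | ∃ h ∈ H, h.1 ∈ S ∧ h.2 = g},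
        ∀ y ∈ {g : G | ∃ h ∈ H, h.1 ∈ S ∧ h.2 = g},
          x ≠ y → x - y ∉ U := by
  -- pick a compact neighborhood of 0 in G
  obtain ⟨K₀, hK₀c, hK₀n⟩ := exists_compact_mem_nhds (0 : G)
  -- H is closed
  have hHclosed : IsClosed (H : Set ((Fin m → ℝ) × G)) :=
    AddSubgroup.isClosed_of_discrete
  -- the trap set
  set T : Set ((Fin m → ℝ) × G) := (H : Set _) ∩ ((S - S) ×ˢ K₀) with hT
  have hTcomp : IsCompact T := ((by rw [sub_eq_add_neg]; exact hS.add hS.neg : IsCompact (S - S)).prod hK₀c).inter_left hHclosed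
  have hTdisc : DiscreteTopology T :=
    DiscreteTopology.of_subset (inferInstance : DiscreteTopology H)
      (fun x hx => hx.1)
  have hTfin : T.Finite := hTcomp.finite ⟨hTdisc⟩
  -- finite set of bad second coordinates
  set F : Set G := Prod.snd '' (T \ {0}) with hF
  have hFfin : F.Finite := (hTfin.diff).image _
  refine ⟨interior K₀ \ F, isOpen_interior.sdiff hFfin.isClosed, ?_, ?_⟩
  · constructor
    · exact mem_interior_iff_mem_nhds.mpr hK₀n
    · rintro ⟨p, ⟨⟨hpH, -⟩, hp0⟩, hp2⟩
      apply hp0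
      have : p = 0 := hinj hpH H.zero_mem hp2
      simp [this]
  · rintro x ⟨h, hH, hS1, rfl⟩ y ⟨h', hH', hS1', rfl⟩ hne ⟨hmem, hnotF⟩
    apply hnotF
    refine ⟨h - h', ⟨⟨H.sub_mem hH hH', ?_, interior_subset hmem⟩, ?_⟩, rfl⟩
    · exact ⟨h.1, hS1, h'.1, hS1', rfl⟩
    · intro h0
      apply hne
      have : (h - h').2 = 0 := by rw [Set.mem_singleton_iff.mp h0]; rfl
      simpa [sub_eq_zero] using this
end

section
/- Let G be an LCA group, H a lattice (discrete cocompact subgroup) of ℝ^m × G, and let G̃ be a closed subgroup of G of the form ℝ^d × 𝕋^ℓ × D̃ where D̃ is a subgroup of the discrete part D of G = ℝ^d × 𝕋^ℓ × D. Then H̃ = {(x,g) ∈ H : g ∈ G̃} is a lattice in ℝ^m × G̃. -/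
/-- If `Y` is an open subgroup of a topological abelian group `X`, and `H` is a
discrete cocompact subgroup of `X`, then `H ∩ Y` is discrete and cocompact in `Y`. -/
theorem aux_open_subgroup_lattice {X : Type*} [AddCommGroup X] [TopologicalSpace X]
    [IsTopologicalAddGroup X] (H Y : AddSubgroup X) [DiscreteTopology H]
    (hc : CompactSpace (X ⧸ H)) (hYo : IsOpen (Y : Set X)) :
    DiscreteTopology (H.comap Y.subtype) ∧ CompactSpace (Y ⧸ H.comap Y.subtype) := by
  set K : AddSubgroup Y := H.comap Y.subtype with hK
  constructor
  · -- discreteness: `K` embeds into the discrete group `H`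
    have hcomp : Topology.IsEmbedding (fun k : K => ((k : Y) : X)) :=
      Topology.IsEmbedding.subtypeVal.comp Topology.IsEmbedding.subtypeVal
    have hf : Topology.IsEmbedding (fun k : K => (⟨((k : Y) : X), k.2⟩ : H)) := by
      refine Topology.IsEmbedding.of_comp ?_ continuous_subtype_val hcomp
      exact continuous_induced_rng.mpr hcomp.continuous
    exact hf.discreteTopology
  · -- cocompactness
    let φ : Y ⧸ K →+ X ⧸ H := QuotientAddGroup.map K H Y.subtype le_rfl
    have hφmk : ∀ y : Y, φ (QuotientAddGroup.mk y) = QuotientAddGroup.mk (y : X) := fun y =>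
      QuotientAddGroup.map_mk K H Y.subtype le_rfl y
    have hcont : Continuous φ := by
      rw [← QuotientAddGroup.isOpenQuotientMap_mk.continuous_comp_iff]
      have : (φ ∘ (QuotientAddGroup.mk : Y → Y ⧸ K)) =
          (QuotientAddGroup.mk : X → X ⧸ H) ∘ (Subtype.val : Y → X) := by
        funext y; exact hφmk y
      rw [this]
      exact QuotientAddGroup.continuous_mk.comp continuous_subtype_val
    have hinj : Function.Injective φ := by
      intro a b
      refine QuotientAddGroup.induction_on a fun y1 =>
        QuotientAddGroup.induction_on b fun y2 h => ?_
      rw [hφmk, hφmk, QuotientAddGroup.eq] at h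
      refine QuotientAddGroup.eq.mpr ?_
      show Y.subtype (-y1 + y2) ∈ H
      simpa using h
    have hopen : IsOpenMap φ := by
      intro U hU
      have himg : φ '' U = (QuotientAddGroup.mk : X → X ⧸ H) ''
          (Subtype.val '' ((QuotientAddGroup.mk : Y → Y ⧸ K) ⁻¹' U)) := by
        ext x
        constructor
        · rintro ⟨q, hq, rfl⟩
          obtain ⟨y, rfl⟩ := QuotientAddGroup.mk_surjective q
          exact ⟨y, ⟨y, hq, rfl⟩, (hφmk y).symm⟩
        · rintro ⟨_, ⟨y, hy, rfl⟩, rfl⟩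
          exact ⟨QuotientAddGroup.mk y, hy, hφmk y⟩
      rw [himg]
      exact QuotientAddGroup.isOpenMap_coe _
        ((hYo.isOpenMap_subtype_val) _ (hU.preimage QuotientAddGroup.continuous_mk))
    have hembφ : Topology.IsOpenEmbedding φ :=
      Topology.IsOpenEmbedding.of_continuous_injective_isOpenMap hcont hinj hopen
    have hrange : Set.range φ =
        ((Y.map (QuotientAddGroup.mk' H) : AddSubgroup (X ⧸ H)) : Set (X ⧸ H)) := by
      ext x
      constructor
      · rintro ⟨q, rfl⟩
        obtain ⟨y, rfl⟩ := QuotientAddGroup.mk_surjective q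
        exact ⟨(y : X), y.2, (hφmk y).symm⟩
      · rintro ⟨y, hy, rfl⟩
        exact ⟨QuotientAddGroup.mk ⟨y, hy⟩, hφmk ⟨y, hy⟩⟩
    have hclosed : IsClosed (Set.range φ) := by
      rw [hrange]
      exact AddSubgroup.isClosed_of_isOpen _ (hrange ▸ hembφ.isOpen_range)
    have hcpt : IsCompact (Set.range φ) := hclosed.isCompact
    exact ⟨by
      rw [hembφ.toIsEmbedding.isCompact_iff, Set.image_univ]
      exact hcpt⟩

/-- If `H` is a lattice in `ℝ^m × G` with `G = ℝ^d × 𝕋^ℓ × D` (`D` countable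
discrete), and `G̃ = ℝ^d × 𝕋^ℓ × D̃` for a subgroup `D̃ ≤ D`, then
`H̃ = {(x,g) ∈ H : g ∈ G̃}` is a lattice in `ℝ^m × G̃`. -/
theorem lattice_restrict_to_subgroup
    {D : Type*} [AddCommGroup D] [TopologicalSpace D] [DiscreteTopology D] [Countable D]
    (m d ℓ : ℕ) (Dt : AddSubgroup D)
    -- the ambient group `X = ℝ^m × (ℝ^d × 𝕋^ℓ × D)`
    (H : AddSubgroup ((Fin m → ℝ) × ((Fin d → ℝ) × (Fin ℓ → AddCircle (1 : ℝ)) × D)))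
    [DiscreteTopology H]
    (hcocompact : CompactSpace
      (((Fin m → ℝ) × ((Fin d → ℝ) × (Fin ℓ → AddCircle (1 : ℝ)) × D)) ⧸ H))
    -- `Y` is the closed subgroup `ℝ^m × G̃` of `X`
    (Y : AddSubgroup ((Fin m → ℝ) × ((Fin d → ℝ) × (Fin ℓ → AddCircle (1 : ℝ)) × D)))
    (hY : (Y : Set ((Fin m → ℝ) × ((Fin d → ℝ) × (Fin ℓ → AddCircle (1 : ℝ)) × D))) = {x | x.2.2.2 ∈ Dt}) :
    DiscreteTopology (H.comap Y.subtype) ∧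
      CompactSpace (Y ⧸ H.comap Y.subtype) := by
  haveI : IsTopologicalAddGroup D :=
    { continuous_add := continuous_of_discreteTopology
      continuous_neg := continuous_of_discreteTopology }
  have hYo : IsOpen (Y : Set ((Fin m → ℝ) × ((Fin d → ℝ) × (Fin ℓ → AddCircle (1 : ℝ)) × D))) := by
    rw [hY]
    exact (isOpen_discrete (Dt : Set D)).preimage (continuous_snd.snd.snd)
  exact aux_open_subgroup_lattice H Y hcocompact hYo
end

section
/- Let G be an abelian topological group of the form ℝ^d × 𝕋^ℓ × D with D countable discrete, let H be a lattice in ℝ^m × G, and for r ∈ D let H_r be the set of elements of H whose D-coordinate equals r. Then H_0 is a lattice in ℝ^m × ℝ^d × 𝕋^ℓ × {0}, and for every r with H_r nonempty, H_r is a coset (translate) of H_0. -/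
theorem myaux_discrete {X : Type*} [AddCommGroup X] [TopologicalSpace X]
    (H Y : AddSubgroup X) [DiscreteTopology H] :
    DiscreteTopology (H.comap Y.subtype) := by
  let f : H.comap Y.subtype → H := fun k => ⟨(k.1 : X), k.2⟩
  have hemb : Topology.IsEmbedding f := by
    refine Topology.IsEmbedding.of_comp (f := f) (g := (Subtype.val : H → X))
      ((continuous_subtype_val.comp continuous_subtype_val).subtype_mk _)
      continuous_subtype_val ?_
    have heq : (Subtype.val : H → X) ∘ f
        = (Subtype.val : Y → X) ∘ (Subtype.val : (H.comap Y.subtype) → Y) := rfl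
    rw [heq]
    exact (Topology.IsEmbedding.subtypeVal).comp Topology.IsEmbedding.subtypeVal
  exact hemb.discreteTopology

theorem myaux_compact {X : Type*} [AddCommGroup X] [TopologicalSpace X]
    [IsTopologicalAddGroup X]
    (H Y : AddSubgroup X) [CompactSpace (X ⧸ H)]
    (hYopen : IsOpen (Y : Set X)) :
    CompactSpace (Y ⧸ H.comap Y.subtype) := by
  classical
  set K := H.comap Y.subtype with hK
  set W : AddSubgroup X := Y ⊔ H with hW
  have hWopen : IsOpen (W : Set X) := AddSubgroup.isOpen_mono le_sup_left hYopen
  have hWclosed : IsClosed (W : Set X) := W.isClosed_of_isOpen hWopen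
  -- image of Y equals image of W in X ⧸ H
  have himg : (QuotientAddGroup.mk '' (Y : Set X) : Set (X ⧸ H))
      = QuotientAddGroup.mk '' (W : Set X) := by
    apply Set.Subset.antisymm
    · exact Set.image_mono (fun x hx => AddSubgroup.mem_sup_left hx)
    · rintro _ ⟨w, hw, rfl⟩
      obtain ⟨y, hy, h, hh, rfl⟩ := AddSubgroup.mem_sup.mp hw
      refine ⟨y, hy, ?_⟩
      rw [QuotientAddGroup.eq]
      simpa using hh
  have hpre : ((QuotientAddGroup.mk : X → X ⧸ H) ⁻¹' (QuotientAddGroup.mk '' (W : Set X)) : Set X)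
      = (W : Set X) := by
    ext x
    constructor
    · rintro ⟨w, hw, hwx⟩
      have hmem : -w + x ∈ H := QuotientAddGroup.eq.mp hwx
      have : -w + x ∈ W := (le_sup_right : H ≤ W) hmem
      simpa using W.add_mem hw this
    · exact fun hx => ⟨x, hx, rfl⟩
  have hclosed : IsClosed (QuotientAddGroup.mk '' (W : Set X) : Set (X ⧸ H)) := by
    rw [← (QuotientAddGroup.isQuotientMap_mk H).isClosed_preimage, hpre]
    exact hWclosed
  have hcompW : IsCompact (QuotientAddGroup.mk '' (W : Set X) : Set (X ⧸ H)) :=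
    hclosed.isCompact
  -- the induced map
  let f : Y ⧸ K → X ⧸ H := QuotientAddGroup.map K H Y.subtype le_rfl
  have hfmk : ∀ y : Y, f (QuotientAddGroup.mk y) = QuotientAddGroup.mk (y : X) := fun y => rfl
  have hcont : Continuous f := by
    rw [(QuotientAddGroup.isQuotientMap_mk K).continuous_iff]
    exact QuotientAddGroup.continuous_mk.comp continuous_subtype_val
  have hinj : Function.Injective f := by
    intro a b
    induction a using QuotientAddGroup.induction_on with | H y₁ =>
    induction b using QuotientAddGroup.induction_on with | H y₂ =>
    intro hab
    rw [hfmk, hfmk, QuotientAddGroup.eq] at hab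
    rw [QuotientAddGroup.eq]
    exact hab
  have hopenmap : IsOpenMap f := by
    intro U hU
    have hU' : f '' U = QuotientAddGroup.mk ''
        (Subtype.val '' (QuotientAddGroup.mk ⁻¹' U : Set Y)) := by
      rw [Set.image_image]
      have : U = QuotientAddGroup.mk '' (QuotientAddGroup.mk ⁻¹' U : Set Y) :=
        (Set.image_preimage_eq U (QuotientAddGroup.mk_surjective)).symm
      conv_lhs => rw [this]
      rw [Set.image_image]
      exact Set.image_congr fun y _ => hfmk y
    rw [hU', ← Set.image_comp]
    exact (QuotientAddGroup.isOpenMap_coe.comp hYopen.isOpenMap_subtype_val) _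
      ((QuotientAddGroup.continuous_mk).isOpen_preimage U hU)
  have hrange : Set.range f = QuotientAddGroup.mk '' (Y : Set X) := by
    ext q
    constructor
    · rintro ⟨a, rfl⟩
      induction a using QuotientAddGroup.induction_on with | H y =>
      exact ⟨y, y.2, rfl⟩
    · rintro ⟨x, hx, rfl⟩
      exact ⟨QuotientAddGroup.mk ⟨x, hx⟩, rfl⟩
  have hemb : Topology.IsEmbedding f :=
    (Topology.IsOpenEmbedding.of_continuous_injective_isOpenMap hcont hinj hopenmap).isEmbedding
  have hcomp : IsCompact (f '' (Set.univ : Set (Y ⧸ K))) := by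
    rw [Set.image_univ, hrange, himg]
    exact hcompW
  exact isCompact_univ_iff.mp (hemb.isCompact_iff.mpr hcomp)

/-- If `H` is a lattice in `ℝ^m × ℝ^d × 𝕋^ℓ × D` with `D` countable discrete, then
`H₀` (elements of `H` with `D`-coordinate `0`) is a lattice in the subgroup
`ℝ^m × ℝ^d × 𝕋^ℓ × {0}`, and every nonempty fiber `H_r` is a translate of `H₀`. -/
theorem lattice_fiber_structure
    {D : Type*} [AddCommGroup D] [TopologicalSpace D] [DiscreteTopology D] [Countable D]
    (m d ℓ : ℕ)
    (H : AddSubgroup ((Fin m → ℝ) × (Fin d → ℝ) × (Fin ℓ → AddCircle (1 : ℝ)) × D))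
    [DiscreteTopology H]
    (hcocompact : CompactSpace
      (((Fin m → ℝ) × (Fin d → ℝ) × (Fin ℓ → AddCircle (1 : ℝ)) × D) ⧸ H))
    (Y : AddSubgroup ((Fin m → ℝ) × (Fin d → ℝ) × (Fin ℓ → AddCircle (1 : ℝ)) × D))
    (hY : (Y : Set ((Fin m → ℝ) × (Fin d → ℝ) × (Fin ℓ → AddCircle (1 : ℝ)) × D)) =
      {x | x.2.2.2 = 0}) :
    (DiscreteTopology (H.comap Y.subtype) ∧ CompactSpace (Y ⧸ H.comap Y.subtype)) ∧
      ∀ r : D, (∃ x ∈ H, x.2.2.2 = r) →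
        ∃ h₀ ∈ H, h₀.2.2.2 = r ∧
          {x | x ∈ H ∧ x.2.2.2 = r} = (fun y => h₀ + y) '' {x | x ∈ H ∧ x.2.2.2 = 0} := by
  haveI : IsTopologicalAddGroup D :=
    { continuous_add := continuous_of_discreteTopology
      continuous_neg := continuous_of_discreteTopology }
  have hYopen : IsOpen (Y : Set ((Fin m → ℝ) × (Fin d → ℝ) × (Fin ℓ → AddCircle (1 : ℝ)) × D)) := by
    rw [hY]
    exact (continuous_snd.snd.snd).isOpen_preimage {0} (isOpen_discrete _)
  refine ⟨⟨myaux_discrete H Y, myaux_compact H Y hYopen⟩, ?_⟩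
  rintro r ⟨x, hxH, hxr⟩
  refine ⟨x, hxH, hxr, ?_⟩
  ext z
  simp only [Set.mem_setOf_eq, Set.mem_image]
  constructor
  · rintro ⟨hzH, hzr⟩
    refine ⟨z - x, ⟨H.sub_mem hzH hxH, ?_⟩, by abel⟩
    have : (z - x).2.2.2 = z.2.2.2 - x.2.2.2 := rfl
    rw [this, hzr, hxr, sub_self]
  · rintro ⟨w, ⟨hwH, hw0⟩, rfl⟩
    refine ⟨H.add_mem hxH hwH, ?_⟩
    have : (x + w).2.2.2 = x.2.2.2 + w.2.2.2 := rfl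
    rw [this, hxr, hw0, add_zero]
end

section
/- Let m, d ∈ ℕ and p a prime. For the group G = ℝ^d × 𝕋^ℓ × (ℤ/pℤ)^{m+d+1}, there is no lattice H in ℝ^m × G such that simultaneously: the projection p₁ : H → ℝ^m is injective with dense image, and the projection p₂ : H → G is injective with dense image. -/
noncomputable instance (p : ℕ) : TopologicalSpace (ZMod p) := ⊥

instance (p : ℕ) : DiscreteTopology (ZMod p) := ⟨rfl⟩

/-- The ambient group `ℝ^m × (ℝ^d × 𝕋^ℓ × (ℤ/pℤ)^{m+d+1})`. -/
abbrev CPSpace (m d ℓ p : ℕ) :=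
  (Fin m → ℝ) × ((Fin d → ℝ) × (Fin ℓ → AddCircle (1 : ℝ)) × (Fin (m + d + 1) → ZMod p))

instance (p : ℕ) : IsTopologicalAddGroup (ZMod p) where
  continuous_add := continuous_of_discreteTopology
  continuous_neg := continuous_of_discreteTopology

/-- A discrete subgroup of a T1 topological additive group is closed. -/
theorem aux_isClosed_of_discrete {G : Type*} [AddGroup G] [TopologicalSpace G]
    [IsTopologicalAddGroup G] [T1Space G] (H : AddSubgroup G) [DiscreteTopology H] :
    IsClosed (H : Set G) := by
  refine isClosed_of_closure_subset fun x hx => ?_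
  obtain ⟨V, hV, hV0⟩ := nhds_inter_eq_singleton_of_mem_discrete (x := (0 : G))
    (isDiscrete_iff_discreteTopology.mpr ‹DiscreteTopology H›) H.zero_mem
  have hsub : Filter.Tendsto (fun p : G × G => p.1 - p.2) (nhds (0, 0)) (nhds (0 : G)) := by
    simpa using (continuous_sub (G := G)).tendsto ((0 : G), (0 : G))
  have hpre : (fun p : G × G => p.1 - p.2) ⁻¹' V ∈ nhds ((0 : G), (0 : G)) := hsub hV
  rw [mem_nhds_prod_iff] at hpre
  obtain ⟨W₁, hW₁, W₂, hW₂, hW⟩ := hpre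
  set W := W₁ ∩ W₂ with hWdef
  have hWmem : W ∈ nhds (0 : G) := Filter.inter_mem hW₁ hW₂
  have hWsub : ∀ a ∈ W, ∀ b ∈ W, a - b ∈ V := fun a ha b hb =>
    hW (Set.mk_mem_prod ha.1 hb.2)
  have hcont : Continuous fun y : G => y - x := continuous_id.sub continuous_const
  have hWx : (fun y : G => y - x) ⁻¹' W ∈ nhds x := by
    apply hcont.continuousAt.preimage_mem_nhds
    simpa using hWmem
  obtain ⟨h₁, hh₁W, hh₁H⟩ := mem_closure_iff_nhds.mp hx _ hWx
  by_contra hxH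
  have hne : x ≠ h₁ := fun h => hxH (h ▸ hh₁H)
  have hO : ((fun y : G => y - x) ⁻¹' W) ∩ {h₁}ᶜ ∈ nhds x :=
    Filter.inter_mem hWx ((isOpen_compl_singleton).mem_nhds hne)
  obtain ⟨h₂, ⟨hh₂W, hh₂O⟩, hh₂H⟩ := mem_closure_iff_nhds.mp hx _ hO
  have hmem : h₂ - h₁ ∈ V ∩ (H : Set G) := by
    constructor
    · have := hWsub _ hh₂W _ hh₁W
      simpa [sub_sub_sub_cancel_right] using this
    · exact AddSubgroup.sub_mem H hh₂H hh₁H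
  rw [hV0] at hmem
  exact hh₂O (by simpa [sub_eq_zero] using hmem)

open Module Submodule in
/-- Rank bound for a discrete subgroup of a finite-dimensional real space. -/
theorem aux_finrank_le {E : Type*} [NormedAddCommGroup E] [NormedSpace ℝ E]
    [FiniteDimensional ℝ E] (L : Submodule ℤ E) [DiscreteTopology L] :
    Module.finrank ℤ L ≤ Module.finrank ℝ E := by
  let f := (span ℝ (L : Set E)).subtype
  let L₀ := L.comap (f.restrictScalars ℤ)
  have h_img : f '' L₀ = L := by
    rw [← LinearMap.coe_restrictScalars ℤ f, ← Submodule.map_coe (f.restrictScalars ℤ),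
      Submodule.map_comap_eq_self]
    exact fun x hx ↦ LinearMap.mem_range.mpr ⟨⟨x, Submodule.subset_span hx⟩, rfl⟩
  have hdisc : DiscreteTopology L₀ := by
    refine DiscreteTopology.preimage_of_continuous_injective (L : Set E) ?_ (injective_subtype _)
    exact LinearMap.continuous_of_finiteDimensional f
  have hlat : IsZLattice ℝ L₀ := ⟨by
    rw [← (Submodule.map_injective_of_injective (injective_subtype _)).eq_iff, Submodule.map_span,
      Submodule.map_top, range_subtype, h_img]⟩
  have hrk : Module.finrank ℤ L₀ = Module.finrank ℝ (span ℝ (L : Set E)) :=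
    ZLattice.rank ℝ L₀
  have he : Module.finrank ℤ L = Module.finrank ℤ L₀ := by
    have e := Submodule.equivMapOfInjective (f.restrictScalars ℤ) (injective_subtype _) L₀
    have h_map : L₀.map (f.restrictScalars ℤ) = L := SetLike.ext'_iff.mpr h_img
    rw [h_map] at e
    exact e.symm.finrank_eq
  rw [he, hrk]
  exact Submodule.finrank_le _

set_option synthInstance.maxHeartbeats 1000000 in
set_option maxHeartbeats 1000000 in
/-- For `G = ℝ^d × 𝕋^ℓ × (ℤ/pℤ)^{m+d+1}` there is no lattice `H` in `ℝ^m × G`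
making `(ℝ^m, G, H)` a complete cut-and-project scheme: one cannot have both
projections injective on `H` with dense images. -/
theorem no_complete_cut_and_project_scheme (m d ℓ : ℕ) (p : ℕ) (hp : p.Prime) :
    ¬ ∃ H : AddSubgroup (CPSpace m d ℓ p),
      DiscreteTopology H ∧
      CompactSpace (CPSpace m d ℓ p ⧸ H) ∧
      Set.InjOn Prod.fst (H : Set (CPSpace m d ℓ p)) ∧
      Dense (Prod.fst '' (H : Set (CPSpace m d ℓ p))) ∧
      Set.InjOn Prod.snd (H : Set (CPSpace m d ℓ p)) ∧
      Dense (Prod.snd '' (H : Set (CPSpace m d ℓ p))) := by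
  haveI := Fact.mk hp
  rintro ⟨H, hHdisc, -, hinj1, -, hinj2, hdense2⟩
  haveI : DiscreteTopology H := hHdisc
  -- the projection to `ℝ^m × ℝ^d`
  let φ : CPSpace m d ℓ p →+ (Fin m → ℝ) × (Fin d → ℝ) :=
    { toFun := fun x => (x.1, x.2.1), map_zero' := rfl, map_add' := fun _ _ => rfl }
  have hφinj : Set.InjOn φ (H : Set (CPSpace m d ℓ p)) := by
    intro a ha b hb hab
    have h1 := congrArg Prod.fst hab
    exact hinj1 ha hb h1
  -- surjectivity onto the `(ℤ/p)^{m+d+1}` factor, from density of `p₂`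
  have hsurjZ : ∀ z : Fin (m + d + 1) → ZMod p, ∃ h, h ∈ H ∧ h.2.2.2 = z := by
    intro z
    have hopen : IsOpen {g : (Fin d → ℝ) × (Fin ℓ → AddCircle (1 : ℝ)) ×
        (Fin (m + d + 1) → ZMod p) | g.2.2 = z} := by
      have hc : Continuous fun g : (Fin d → ℝ) × (Fin ℓ → AddCircle (1 : ℝ)) ×
          (Fin (m + d + 1) → ZMod p) => g.2.2 := continuous_snd.snd
      exact (isOpen_discrete {z}).preimage hc
    obtain ⟨x, hxD, hxW⟩ := hdense2.exists_mem_open hopen ⟨(0, 0, z), rfl⟩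
    obtain ⟨h, hhH, hsnd⟩ := hxD
    exact ⟨h, hhH, by rw [show h.2 = x from hsnd]; exact hxW⟩
  -- the image lattice in `ℝ^m × ℝ^d`
  let L : Submodule ℤ ((Fin m → ℝ) × (Fin d → ℝ)) :=
    AddSubgroup.toIntSubmodule (H.map φ)
  -- `H` is closed
  have hHclosed : IsClosed (H : Set (CPSpace m d ℓ p)) := aux_isClosed_of_discrete H
  -- a compact slab
  set S : Set (CPSpace m d ℓ p) :=
    Metric.closedBall (0 : Fin m → ℝ) 1 ×ˢ
      (Metric.closedBall (0 : Fin d → ℝ) 1 ×ˢ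
        (Set.univ : Set ((Fin ℓ → AddCircle (1 : ℝ)) × (Fin (m + d + 1) → ZMod p)))) with hSdef
  have hScomp : IsCompact S :=
    (isCompact_closedBall _ _).prod ((isCompact_closedBall _ _).prod isCompact_univ)
  have hT : IsCompact ((H : Set (CPSpace m d ℓ p)) ∩ S) := hScomp.inter_left hHclosed
  have hTdisc : DiscreteTopology ((H : Set (CPSpace m d ℓ p)) ∩ S : Set (CPSpace m d ℓ p)) :=
    DiscreteTopology.of_subset hHdisc Set.inter_subset_left
  have hTfin : ((H : Set (CPSpace m d ℓ p)) ∩ S).Finite := hT.finite (isDiscrete_iff_discreteTopology.mpr hTdisc)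
  have hF₀ : ((φ '' ((H : Set (CPSpace m d ℓ p)) ∩ S)) \ {0}).Finite :=
    (hTfin.image φ).subset Set.diff_subset
  set U : Set ((Fin m → ℝ) × (Fin d → ℝ)) :=
    Metric.ball 0 1 \ ((φ '' ((H : Set (CPSpace m d ℓ p)) ∩ S)) \ {0}) with hUdef
  have hUopen : IsOpen U := Metric.isOpen_ball.sdiff hF₀.isClosed
  have h0U : (0 : (Fin m → ℝ) × (Fin d → ℝ)) ∈ U :=
    ⟨Metric.mem_ball_self one_pos, fun hc => hc.2 rfl⟩
  have hkey : ∀ y : (Fin m → ℝ) × (Fin d → ℝ), y ∈ (L : Set _) → y ∈ U → y = 0 := by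
    intro y hy hyU
    obtain ⟨h, hhH, rfl⟩ := AddSubgroup.mem_map.mp (show y ∈ AddSubgroup.map φ H from hy)
    have hb : dist (φ h) (0 : (Fin m → ℝ) × (Fin d → ℝ)) < 1 := Metric.mem_ball.mp hyU.1
    have hS : h ∈ S := by
      refine Set.mem_prod.mpr ⟨?_, Set.mem_prod.mpr ⟨?_, trivial⟩⟩
      · refine Metric.mem_closedBall.mpr (le_trans ?_ hb.le)
        rw [Prod.dist_eq]
        exact le_max_left _ _
      · refine Metric.mem_closedBall.mpr (le_trans ?_ hb.le)
        rw [Prod.dist_eq]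
        exact le_max_right _ _
    by_contra hne
    exact hyU.2 ⟨⟨h, ⟨hhH, hS⟩, rfl⟩, hne⟩
  haveI hLdisc : DiscreteTopology L := by
    apply discreteTopology_of_isOpen_singleton_zero
    have hss : ({0} : Set L) = (Subtype.val : L → (Fin m → ℝ) × (Fin d → ℝ)) ⁻¹' U := by
      ext x
      simp only [Set.mem_singleton_iff, Set.mem_preimage]
      constructor
      · rintro rfl; exact h0U
      · intro hxU; exact Subtype.ext (hkey x.1 x.2 hxU)
    rw [hss]
    exact hUopen.preimage continuous_subtype_val
  -- rank bound
  have h1 : Module.finrank ℤ L ≤ m + d := by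
    have h2 := aux_finrank_le L
    have h3 : Module.finrank ℝ ((Fin m → ℝ) × (Fin d → ℝ)) = m + d := by
      simp [Module.finrank_prod, Module.finrank_pi]
    rwa [h3] at h2
  -- the isomorphism `H ≃+ L`
  let ψ : H →+ L :=
    { toFun := fun h => ⟨φ h.1, show φ h.1 ∈ AddSubgroup.map φ H from
        AddSubgroup.mem_map_of_mem φ h.2⟩
      map_zero' := Subtype.ext (map_zero φ)
      map_add' := fun a b => Subtype.ext (map_add φ a.1 b.1) }
  have hψbij : Function.Bijective ψ := by
    constructor
    · intro a b hab
      exact Subtype.ext (hφinj a.2 b.2 (congrArg Subtype.val hab))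
    · rintro ⟨y, hy⟩
      obtain ⟨h, hhH, hfh⟩ := AddSubgroup.mem_map.mp (show y ∈ AddSubgroup.map φ H from hy)
      exact ⟨⟨h, hhH⟩, Subtype.ext hfh⟩
  let e := AddEquiv.ofBijective ψ hψbij
  -- the surjection onto `(ℤ/p)^{m+d+1}`
  let π : CPSpace m d ℓ p →+ (Fin (m + d + 1) → ZMod p) :=
    { toFun := fun x => x.2.2.2, map_zero' := rfl, map_add' := fun _ _ => rfl }
  let f : L →+ (Fin (m + d + 1) → ZMod p) := (π.comp H.subtype).comp e.symm.toAddMonoidHom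
  have hfsurj : Function.Surjective f := by
    intro z
    obtain ⟨h, hhH, hz⟩ := hsurjZ z
    refine ⟨e ⟨h, hhH⟩, ?_⟩
    show π (H.subtype (e.symm (e ⟨h, hhH⟩))) = z
    rw [e.symm_apply_apply]
    exact hz
  -- count
  let flin := f.toIntLinearMap
  have hfl : Function.Surjective flin := hfsurj
  let b := Module.Free.chooseBasis ℤ L
  have hspanZ : Submodule.span ℤ (Set.range (flin ∘ b)) = ⊤ := by
    rw [Set.range_comp, ← Submodule.map_span, b.span_eq, Submodule.map_top,
      LinearMap.range_eq_top.mpr hfl]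
  have hspanP : Submodule.span (ZMod p) (Set.range (flin ∘ b)) = ⊤ := by
    have hle : (⊤ : Submodule ℤ (Fin (m + d + 1) → ZMod p)) ≤
        Submodule.restrictScalars ℤ (Submodule.span (ZMod p) (Set.range (flin ∘ b))) := by
      rw [← hspanZ]
      exact Submodule.span_le.mpr Submodule.subset_span
    rw [Submodule.eq_top_iff']
    intro x
    exact hle Submodule.mem_top
  have hZrank : Module.finrank (ZMod p) (Fin (m + d + 1) → ZMod p) = m + d + 1 := by
    simp [Module.finrank_pi]
  have hle2 : Module.finrank (ZMod p) (Fin (m + d + 1) → ZMod p) ≤ Module.finrank ℤ L := by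
    classical
    have h3 := finrank_span_le_card (R := ZMod p) (Set.range (flin ∘ b))
    rw [hspanP, finrank_top] at h3
    refine h3.trans ?_
    rw [Module.finrank_eq_card_chooseBasisIndex ℤ L, Set.toFinset_range]
    refine Finset.card_image_le.trans (le_of_eq ?_)
    convert Finset.card_univ
  rw [hZrank] at hle2
  omega
end

section
/- Let G be an LCA group with Haar measure μ, Ω ⊆ G compact, and ε > 0. Then there exists a compact set Ω′ ⊇ Ω with μ(∂Ω′) = 0 and μ(Ω′ ∖ Ω) ≤ ε. -/
open MeasureTheory

/-- Auxiliary: the statement for a *regular* Haar measure, with `ε : ℝ≥0∞`. -/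
theorem exists_riemann_integrable_enlargement_aux
    {G : Type*} [AddCommGroup G] [TopologicalSpace G] [IsTopologicalAddGroup G]
    [LocallyCompactSpace G] [T2Space G]
    [MeasurableSpace G] [BorelSpace G]
    (ν : Measure G) [ν.IsAddHaarMeasure] [ν.Regular]
    (Ω : Set G) (hΩ : IsCompact Ω) {ε : ENNReal} (hε : ε ≠ 0) :
    ∃ Ω' : Set G, IsCompact Ω' ∧ Ω ⊆ Ω' ∧ ν (frontier Ω') = 0 ∧
      ν (Ω' \ Ω) ≤ ε := by
  -- outer regularity: an open set U ⊇ Ω of measure < ν Ω + ε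
  obtain ⟨U, hΩU, hUopen, hUlt⟩ : ∃ U, Ω ⊆ U ∧ IsOpen U ∧ ν U < ν Ω + ε :=
    hΩ.exists_isOpen_lt_add hε
  -- Urysohn function
  obtain ⟨f, hf1, hf0, hfc, hfrange⟩ : ∃ f : C(G, ℝ), Set.EqOn f 1 Ω ∧ Set.EqOn f 0 Uᶜ
      ∧ HasCompactSupport f ∧ ∀ x, f x ∈ Set.Icc (0:ℝ) 1 :=
    exists_continuous_one_zero_of_isCompact hΩ hUopen.isClosed_compl
      (disjoint_compl_right_iff.mpr hΩU)
  -- pick a level α ∈ (0,1) whose level set is ν-null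
  set K : Set G := tsupport f with hK
  have hKc : IsCompact K := hfc
  have hKmeas : MeasurableSet K := (isClosed_tsupport f).measurableSet
  haveI : IsFiniteMeasure (ν.restrict K) :=
    ⟨by simpa [Measure.restrict_apply_univ] using hKc.measure_lt_top⟩
  have hcount : Set.Countable {t : ℝ | 0 < (ν.restrict K) {a | f a = t}} :=
    Measure.countable_meas_level_set_pos (f.continuous.measurable)
  obtain ⟨α, hα, hαnot⟩ : ∃ α ∈ Set.Ioo (0:ℝ) 1,
      α ∉ {t : ℝ | 0 < (ν.restrict K) {a | f a = t}} := by
    by_contra h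
    push_neg at h
    have hsub : Set.Ioo (0:ℝ) 1 ⊆ {t : ℝ | 0 < (ν.restrict K) {a | f a = t}} := h
    have hIoo : (Set.Ioo (0:ℝ) 1).Countable := hcount.mono hsub
    have := hIoo.le_aleph0
    rw [Cardinal.mk_Ioo_real (by norm_num : (0:ℝ) < 1)] at this
    exact absurd this (not_le.mpr Cardinal.aleph0_lt_continuum)
  -- the level set is null
  have hlevel_sub : {a | f a = α} ⊆ K := by
    intro x hx
    have : f x ≠ 0 := by rw [hx]; exact ne_of_gt hα.1
    exact subset_tsupport f this
  have hlevel : ν {a | f a = α} = 0 := by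
    have h1 : (ν.restrict K) {a | f a = α} = ν {a | f a = α} := by
      rw [Measure.restrict_apply' hKmeas, Set.inter_eq_self_of_subset_left hlevel_sub]
    have h2 : ¬ 0 < (ν.restrict K) {a | f a = α} := hαnot
    rw [h1] at h2
    exact le_antisymm (not_lt.mp h2) (zero_le)
  -- the enlargement
  refine ⟨f ⁻¹' Set.Ici α, ?_, ?_, ?_, ?_⟩
  · -- compact
    refine IsCompact.of_isClosed_subset hKc (isClosed_Ici.preimage f.continuous) ?_
    intro x hx
    have : f x ≠ 0 := by
      intro h
      rw [Set.mem_preimage, Set.mem_Ici, h] at hx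
      exact absurd (lt_of_lt_of_le hα.1 hx) (lt_irrefl _)
    exact subset_tsupport f this
  · -- contains Ω
    intro x hx
    simp only [Set.mem_preimage, Set.mem_Ici, hf1 hx, Pi.one_apply]
    exact hα.2.le
  · -- null frontier
    have hfr : frontier (f ⁻¹' Set.Ici α) ⊆ {a | f a = α} := by
      have h := frontier_le_subset_eq (continuous_const : Continuous fun _ : G => α)
        f.continuous
      intro x hx
      have hx' : x ∈ frontier {b : G | α ≤ f b} := by
        exact hx
      exact (h hx').symm
    exact le_antisymm ((measure_mono hfr).trans hlevel.le) (zero_le)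
  · -- small excess
    have hsubU : f ⁻¹' Set.Ici α ⊆ U := by
      intro x hx
      by_contra hxU
      have : f x = 0 := hf0 hxU
      rw [Set.mem_preimage, Set.mem_Ici, this] at hx
      exact absurd (lt_of_lt_of_le hα.1 hx) (lt_irrefl _)
    have hdiff : f ⁻¹' Set.Ici α \ Ω ⊆ U \ Ω := Set.diff_subset_diff_left hsubU
    refine (measure_mono hdiff).trans ?_
    have h1 : ν (U \ Ω) = ν U - ν Ω :=
      measure_diff hΩU hΩ.measurableSet.nullMeasurableSet hΩ.measure_lt_top.ne
    rw [h1]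
    rw [tsub_le_iff_right]
    rw [add_comm]
    exact hUlt.le

/-- Every compact set in an LCA group with Haar measure admits a Riemann
integrable compact enlargement of arbitrarily small excess measure. -/
theorem exists_riemann_integrable_enlargement
    {G : Type*} [AddCommGroup G] [TopologicalSpace G] [IsTopologicalAddGroup G]
    [LocallyCompactSpace G] [T2Space G]
    [MeasurableSpace G] [BorelSpace G]
    (μ : Measure G) [μ.IsAddHaarMeasure]
    (Ω : Set G) (hΩ : IsCompact Ω) (ε : ℝ) (hε : 0 < ε) :
    ∃ Ω' : Set G, IsCompact Ω' ∧ Ω ⊆ Ω' ∧ μ (frontier Ω') = 0 ∧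
      μ (Ω' \ Ω) ≤ ENNReal.ofReal ε := by
  set ν : Measure G := Measure.addHaar with hν
  set c : NNReal := Measure.addHaarScalarFactor μ ν with hc
  have key : ∀ s : Set G, IsCompact (closure s) → μ s = c • ν s := fun s hs =>
    Measure.measure_isAddInvariant_eq_smul_of_isCompact_closure μ ν hs
  have hc0 : c ≠ 0 :=
    ne_of_gt (Measure.addHaarScalarFactor_pos_of_isAddHaarMeasure μ ν)
  have hctop : (c : ENNReal) ≠ ⊤ := ENNReal.coe_ne_top
  have hε' : ENNReal.ofReal ε / (c : ENNReal) ≠ 0 := by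
    apply ENNReal.div_ne_zero.mpr
    exact ⟨ne_of_gt (ENNReal.ofReal_pos.mpr hε), hctop⟩
  obtain ⟨Ω', hΩ'c, hΩΩ', hfr, hexc⟩ :=
    exists_riemann_integrable_enlargement_aux ν Ω hΩ hε'
  have hΩ'closed : IsClosed Ω' := hΩ'c.isClosed
  refine ⟨Ω', hΩ'c, hΩΩ', ?_, ?_⟩
  · have hclos : IsCompact (closure (frontier Ω')) := by
      refine IsCompact.of_isClosed_subset hΩ'c isClosed_closure ?_
      exact closure_minimal hΩ'closed.frontier_subset hΩ'closed
    rw [key _ hclos, hfr, smul_zero]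
  · have hclos : IsCompact (closure (Ω' \ Ω)) := by
      refine IsCompact.of_isClosed_subset hΩ'c isClosed_closure ?_
      exact closure_minimal Set.diff_subset hΩ'closed
    rw [key _ hclos]
    calc (c : ENNReal) • ν (Ω' \ Ω) ≤ (c : ENNReal) * (ENNReal.ofReal ε / c) := by
          rw [smul_eq_mul]
          exact mul_le_mul_right hexc _
      _ = ENNReal.ofReal ε := ENNReal.mul_div_cancel (by exact_mod_cast hc0) hctop
end

section
/- Every countable abelian group that, for every prime p, contains no subgroup isomorphic to (ℤ/pℤ)^{n+1}, embeds into a group of the form ℚ^{k} ⊕ ⨁_p ℤ(p^∞)^{k_p} with all k_p ≤ n. -/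
/-- The Prüfer `p`-group, realized as the `p`-primary component of `ℚ/ℤ`. -/
noncomputable def Prufer (p : Nat.Primes) : AddSubgroup (AddCircle (1 : ℚ)) :=
  letI : Fact (p : ℕ).Prime := ⟨p.2⟩
  AddCommGroup.primaryComponent (AddCircle (1 : ℚ)) p

lemma mem_prufer (p : Nat.Primes) (x : AddCircle (1 : ℚ)) :
    x ∈ Prufer p ↔ ∃ k : ℕ, addOrderOf x = (p : ℕ) ^ k :=
  letI : Fact (p : ℕ).Prime := ⟨p.2⟩
  AddCommGroup.mem_primaryComponent_iff_addOrderOf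

lemma prufer_div_prime (p : Nat.Primes) (q : ℕ) (hq : q.Prime) (z : Prufer p) :
    ∃ w : Prufer p, q • w = z := by
  obtain ⟨e, he⟩ := (mem_prufer p z.1).mp z.2
  have hz0 : (p : ℕ) ^ e • (z : AddCircle (1 : ℚ)) = 0 := by
    rw [← he]; exact addOrderOf_nsmul_eq_zero _
  by_cases hqp : q = (p : ℕ)
  · subst hqp
    obtain ⟨r, hr⟩ := Quotient.exists_rep (z : AddCircle (1 : ℚ))
    have hr' : ((r : ℚ) : AddCircle (1 : ℚ)) = z := hr
    set w0 : AddCircle (1 : ℚ) := ((r / (p : ℕ) : ℚ) : AddCircle (1 : ℚ)) with hw0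
    have hqw0 : (p : ℕ) • w0 = (z : AddCircle (1 : ℚ)) := by
      rw [hw0, ← hr', ← AddCircle.coe_nsmul]
      congr 1
      have hp0 : ((p : ℕ) : ℚ) ≠ 0 := by exact_mod_cast p.2.pos.ne'
      rw [nsmul_eq_mul]
      field_simp
    have hmem : w0 ∈ Prufer p := by
      rw [mem_prufer]
      have hkill : ((p : ℕ) ^ (e + 1)) • w0 = 0 := by
        rw [pow_succ', mul_nsmul, hqw0, hz0]
      obtain ⟨k, _, hk⟩ := (Nat.dvd_prime_pow p.2).mp (addOrderOf_dvd_of_nsmul_eq_zero hkill)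
      exact ⟨k, hk⟩
    refine ⟨⟨w0, hmem⟩, ?_⟩
    ext
    simpa using hqw0
  · have hcop : Nat.Coprime q ((p : ℕ) ^ e) :=
      Nat.Coprime.pow_right _ (((Nat.coprime_primes hq p.2).mpr hqp))
    have hbez := Nat.gcd_eq_gcd_ab q ((p : ℕ) ^ e)
    rw [hcop] at hbez
    set a := Nat.gcdA q ((p : ℕ) ^ e)
    set b := Nat.gcdB q ((p : ℕ) ^ e)
    refine ⟨a • z, ?_⟩
    have hz0n : ((p : ℕ) ^ e) • z = 0 := Subtype.ext (by simpa using hz0)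
    have hz0' : (((p : ℕ) ^ e : ℕ) : ℤ) • z = 0 := by
      rw [natCast_zsmul, hz0n]
    have : (q : ℤ) • (a • z) = ((q : ℤ) * a) • z := by rw [mul_smul]
    calc q • (a • z) = ((q : ℤ) * a) • z := by rw [← this, natCast_zsmul]
    _ = ((1 : ℤ) - (((p : ℕ) ^ e : ℕ) : ℤ) * b) • z := by
        congr 1
        push_cast at hbez ⊢
        linarith
    _ = z - b • ((((p : ℕ) ^ e : ℕ) : ℤ) • z) := by
        rw [sub_smul, one_smul, mul_comm, mul_smul]
    _ = z := by rw [hz0', smul_zero, sub_zero]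

lemma prufer_div (p : Nat.Primes) (m : ℕ) (hm : 0 < m) (z : Prufer p) :
    ∃ w : Prufer p, m • w = z := by
  induction m using Nat.strong_induction_on generalizing z with
  | _ m ih =>
    rcases eq_or_lt_of_le (Nat.one_le_iff_ne_zero.mpr hm.ne') with h1 | h2
    · exact ⟨z, by rw [← h1, one_smul]⟩
    · have hq := Nat.minFac_prime (by omega : m ≠ 1)
      obtain ⟨w1, hw1⟩ := ih (m / m.minFac)
        (Nat.div_lt_self hm hq.one_lt)
        (Nat.div_pos (Nat.minFac_le hm) (Nat.minFac_pos m)) z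
      obtain ⟨w, hw⟩ := prufer_div_prime p m.minFac hq w1
      refine ⟨w, ?_⟩
      rw [← hw1, ← hw, ← mul_nsmul, Nat.mul_div_cancel' (Nat.minFac_dvd m)]


universe u v

/-- ℕ-divisibility implies ℤ-divisibility. -/
lemma int_div_of_nat_div {M : Type v} [AddCommGroup M]
    (h : ∀ (x : M) (m : ℕ), 0 < m → ∃ y, m • y = x) :
    ∀ (x : M) (m : ℤ), m ≠ 0 → ∃ y : M, m • y = x := by
  intro x m hm
  obtain ⟨y, hy⟩ := h x m.natAbs (Int.natAbs_pos.mpr hm)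
  rcases Int.natAbs_eq m with he | he
  · exact ⟨y, by rw [he, natCast_zsmul, hy]⟩
  · exact ⟨-y, by rw [he, neg_smul, natCast_zsmul, smul_neg, neg_neg, hy]⟩

/-- A divisible abelian group is Baer as a ℤ-module. -/
lemma baer_of_divisible {M : Type v} [AddCommGroup M]
    (h : ∀ (x : M) (m : ℤ), m ≠ 0 → ∃ y, m • y = x) : Module.Baer ℤ M := by
  intro I g
  obtain ⟨m, hm⟩ : ∃ m : ℤ, I = Ideal.span {m} :=
    ⟨Submodule.IsPrincipal.generator I, (Submodule.IsPrincipal.span_singleton_generator I).symm⟩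
  by_cases hm0 : m = 0
  · refine ⟨0, fun x hx => ?_⟩
    have hx0 : x = 0 := by
      rw [hm, hm0] at hx
      rw [Ideal.span_singleton_eq_bot.mpr rfl] at hx
      simpa using hx
    subst hx0
    have : (⟨0, hx⟩ : I) = 0 := Subtype.ext rfl
    rw [this, map_zero]
    simp
  · have hmI : m ∈ I := by rw [hm]; exact Ideal.subset_span rfl
    obtain ⟨y, hy⟩ := h (g ⟨m, hmI⟩) m hm0
    refine ⟨LinearMap.toSpanSingleton ℤ M y, fun x hx => ?_⟩
    obtain ⟨c, hc⟩ : ∃ c, x = m * c := by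
      rw [hm] at hx
      obtain ⟨c, hc⟩ := Ideal.mem_span_singleton.mp hx
      exact ⟨c, hc⟩
    have hxI : (⟨x, hx⟩ : I) = c • (⟨m, hmI⟩ : I) := by
      ext
      simp [hc, mul_comm]
    calc (LinearMap.toSpanSingleton ℤ M y) x = x • y := LinearMap.toSpanSingleton_apply ℤ M y x
    _ = c • (m • y) := by rw [hc, mul_comm, mul_smul]
    _ = c • g ⟨m, hmI⟩ := by rw [hy]
    _ = g (c • (⟨m, hmI⟩ : I)) := (map_smul g c _).symm
    _ = g ⟨x, hx⟩ := by rw [← hxI]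

/-- Extension lemma: homs into a divisible group extend from subgroups. -/
lemma extend_of_divisible {M : Type v} [AddCommGroup M]
    (h : ∀ (x : M) (m : ℤ), m ≠ 0 → ∃ y, m • y = x)
    {G : Type u} [AddCommGroup G] (B : AddSubgroup G) (f : B →+ M) :
    ∃ F : G →+ M, ∀ b : B, F b = f b := by
  let M' := ULift.{u} M
  let eM : M' ≃ₗ[ℤ] M := ULift.moduleEquiv
  have h' : ∀ (x : M') (m : ℤ), m ≠ 0 → ∃ y : M', m • y = x := by
    intro x m hm
    obtain ⟨y, hy⟩ := h (eM x) m hm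
    refine ⟨eM.symm y, eM.injective ?_⟩
    rw [map_smul, LinearEquiv.apply_symm_apply, hy]
  have hinj : Module.Injective ℤ M' := (baer_of_divisible h').injective
  let eB : ULift.{v} B ≃ₗ[ℤ] B := ULift.moduleEquiv
  let eG : ULift.{v} G ≃ₗ[ℤ] G := ULift.moduleEquiv
  let i : ULift.{v} B →ₗ[ℤ] ULift.{v} G :=
    eG.symm.toLinearMap ∘ₗ B.subtype.toIntLinearMap ∘ₗ eB.toLinearMap
  have hi : Function.Injective i := by
    intro a b hab
    apply eB.injective
    apply Subtype.ext
    have := congrArg eG hab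
    simpa [i] using this
  let g : ULift.{v} B →ₗ[ℤ] M' :=
    eM.symm.toLinearMap ∘ₗ f.toIntLinearMap ∘ₗ eB.toLinearMap
  obtain ⟨F', hF'⟩ := hinj.out i hi g
  let F : G →+ M := (eM.toLinearMap ∘ₗ F' ∘ₗ eG.symm.toLinearMap).toAddMonoidHom
  refine ⟨F, fun b => ?_⟩
  have h1 := hF' (eB.symm b)
  have h2 : i (eB.symm b) = eG.symm (b : G) := by
    simp [i]
  rw [h2] at h1
  have : F b = eM (F' (eG.symm (b : G))) := rfl
  rw [this, h1]
  simp [g]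


open Module in
lemma exists_eta (p : Nat.Primes) :
    ∃ η : ZMod (p : ℕ) →+ Prufer p, Function.Injective η := by
  haveI : Fact ((0 : ℚ) < 1) := ⟨one_pos⟩
  haveI : NeZero (p : ℕ) := ⟨p.2.pos.ne'⟩
  set x0val : AddCircle (1 : ℚ) := (((((p : ℕ) : ℚ))⁻¹ : ℚ) : AddCircle (1 : ℚ)) with hx0val
  have horder : addOrderOf x0val = (p : ℕ) := by
    have h := AddCircle.addOrderOf_div_of_gcd_eq_one (𝕜 := ℚ) (p := 1)
      (m := 1) (n := (p : ℕ)) p.2.pos (by simp)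
    rw [hx0val]
    convert h using 3
    push_cast
    ring
  have hmem : x0val ∈ Prufer p := (mem_prufer p x0val).mpr ⟨1, by rw [horder, pow_one]⟩
  set x0 : Prufer p := ⟨x0val, hmem⟩ with hx0
  have horder' : addOrderOf x0 = (p : ℕ) := by
    rw [← addOrderOf_injective (Prufer p).subtype Subtype.coe_injective x0]
    exact horder
  have hkill : (zmultiplesHom (Prufer p) x0) ((p : ℕ) : ℤ) = 0 := by
    rw [zmultiplesHom_apply, natCast_zsmul, ← horder', addOrderOf_nsmul_eq_zero]
  refine ⟨ZMod.lift (p : ℕ) ⟨zmultiplesHom (Prufer p) x0, hkill⟩, ?_⟩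
  rw [injective_iff_map_eq_zero]
  intro z hz
  have hval : ((z.val : ℕ) : ZMod (p : ℕ)) = z := ZMod.natCast_rightInverse z
  have hz' : (z.val : ℕ) • x0 = 0 := by
    have h1 : ((z.val : ℕ) : ZMod (p : ℕ)) = ((z.val : ℤ) : ZMod (p : ℕ)) := by push_cast; rfl
    rw [← hval, h1, ZMod.lift_coe] at hz
    rw [zmultiplesHom_apply, natCast_zsmul] at hz
    exact hz
  have hdvd : (p : ℕ) ∣ z.val := by
    have h2 := addOrderOf_dvd_of_nsmul_eq_zero hz'
    rwa [horder'] at h2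
  have : z.val = 0 := by
    by_contra hne
    exact absurd (Nat.le_of_dvd (Nat.pos_of_ne_zero hne) hdvd) (not_le.mpr (ZMod.val_lt z))
  rw [← hval, this, Nat.cast_zero]

open Module in
lemma exists_pi (n : ℕ) {A : Type u} [AddCommGroup A] (p : Nat.Primes)
    (hA : ¬ ∃ f : (Fin (n + 1) → ZMod (p : ℕ)) →+ A, Function.Injective f) :
    ∃ π : A →+ (Fin n → Prufer p),
      ∀ a : A, (p : ℕ) • a = 0 → π a = 0 → a = 0 := by
  haveI : Fact (p : ℕ).Prime := ⟨p.2⟩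
  -- the p-socle of A
  set V : AddSubgroup A := (zsmulAddGroupHom ((p : ℕ) : ℤ)).ker with hV
  have hmemV : ∀ a : A, a ∈ V ↔ (p : ℕ) • a = 0 := by
    intro a
    rw [hV, AddMonoidHom.mem_ker]
    show ((p : ℕ) : ℤ) • a = 0 ↔ _
    rw [natCast_zsmul]
  haveI : Module (ZMod (p : ℕ)) V := AddCommGroup.zmodModule (by
    intro x
    apply Subtype.ext
    have := (hmemV x.1).mp x.2
    simpa using this)
  -- rank bound
  have hrank : Module.rank (ZMod (p : ℕ)) V ≤ n := by
    by_contra hr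
    have hle : ((n + 1 : ℕ) : Cardinal) ≤ Module.rank (ZMod (p : ℕ)) V := by
      push_cast
      exact (Cardinal.add_one_le_succ _).trans (Order.succ_le_of_lt (not_le.mp hr))
    obtain ⟨s, hcard, hli⟩ := le_rank_iff_exists_linearIndependent_finset.mp hle
    let e : Fin (n + 1) ≃ s := (finCongr hcard.symm).trans s.equivFin.symm
    set v : Fin (n + 1) → V := fun i => (e i : V) with hv
    have hliv : LinearIndependent (ZMod (p : ℕ)) v := hli.comp e (Equiv.injective e)
    let L : (Fin (n + 1) → ZMod (p : ℕ)) →ₗ[ZMod (p : ℕ)] V :=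
      Fintype.linearCombination (ZMod (p : ℕ)) v
    have hLinj : Function.Injective L := by
      rw [injective_iff_map_eq_zero]
      intro g hg
      funext i
      refine Fintype.linearIndependent_iff.mp hliv g ?_ i
      simpa [L, Fintype.linearCombination_apply] using hg
    exact hA ⟨V.subtype.comp L.toAddMonoidHom,
      Subtype.coe_injective.comp hLinj⟩
  haveI hfin : Module.Finite (ZMod (p : ℕ)) V :=
    Module.rank_lt_aleph0_iff.mp (lt_of_le_of_lt hrank (Cardinal.nat_lt_aleph0 n))
  have hfr : finrank (ZMod (p : ℕ)) V ≤ n := finrank_le_of_rank_le hrank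
  obtain ⟨η, hη⟩ := exists_eta p
  -- build the injective map on the socle
  have hψ : ∃ ψ : V →+ (Fin n → Prufer p), Function.Injective ψ := by
    by_cases hk0 : finrank (ZMod (p : ℕ)) V = 0
    · haveI : Subsingleton V := by
        rw [← Module.finrank_zero_iff (R := ZMod (p : ℕ))]
        exact hk0
      exact ⟨0, fun a b _ => Subsingleton.elim a b⟩
    · set k := finrank (ZMod (p : ℕ)) V with hk
      let b := Module.finBasis (ZMod (p : ℕ)) V
      let σ : Fin n → Fin k := fun i => ⟨(i : ℕ) % k, Nat.mod_lt _ (Nat.pos_of_ne_zero hk0)⟩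
      have hσ : Function.Surjective σ := by
        intro c
        refine ⟨⟨(c : ℕ), lt_of_lt_of_le c.2 hfr⟩, ?_⟩
        apply Fin.ext
        simpa [σ] using Nat.mod_eq_of_lt c.2
      let J : (Fin k → ZMod (p : ℕ)) →ₗ[ZMod (p : ℕ)] (Fin n → ZMod (p : ℕ)) :=
        LinearMap.funLeft _ _ σ
      have hJ : Function.Injective J := LinearMap.funLeft_injective_of_surjective _ _ _ hσ
      let Φ : (Fin n → ZMod (p : ℕ)) →+ (Fin n → Prufer p) := η.compLeft (Fin n)
      have hΦ : Function.Injective Φ := by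
        intro x y hxy
        funext i
        exact hη (congrFun hxy i)
      refine ⟨Φ.comp (J.toAddMonoidHom.comp b.equivFun.toLinearMap.toAddMonoidHom), ?_⟩
      exact hΦ.comp (hJ.comp b.equivFun.injective)
  obtain ⟨ψ, hψinj⟩ := hψ
  -- divisibility of the target
  have hdvd : ∀ (x : Fin n → Prufer p) (m : ℤ), m ≠ 0 → ∃ y, m • y = x := by
    apply int_div_of_nat_div
    intro x m hm
    have := fun i => prufer_div p m hm (x i)
    choose y hy using this
    exact ⟨y, funext fun i => by simpa using hy i⟩
  obtain ⟨π, hπ⟩ := extend_of_divisible hdvd V ψ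
  refine ⟨π, fun a hpa hπa => ?_⟩
  have haV : a ∈ V := (hmemV a).mpr hpa
  have : ψ ⟨a, haV⟩ = 0 := by rw [← hπ ⟨a, haV⟩]; exact hπa
  have h0 : (⟨a, haV⟩ : V) = 0 := hψinj (by rw [this, map_zero])
  exact congrArg Subtype.val h0


/-- Clearing denominators in a rational span of a ℤ-submodule. -/
lemma exists_nat_smul_mem_of_mem_span_rat {E : Type*} [AddCommGroup E] [Module ℚ E]
    (K' : Submodule ℤ E) (x : E) (hx : x ∈ Submodule.span ℚ (K' : Set E)) :
    ∃ m : ℕ, 0 < m ∧ (m : ℤ) • x ∈ K' := by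
  refine Submodule.span_induction ?_ ?_ ?_ ?_ hx
  · intro y hy
    exact ⟨1, one_pos, by simpa using hy⟩
  · exact ⟨1, one_pos, by simp⟩
  · rintro y z - - ⟨m₁, hm₁, hy⟩ ⟨m₂, hm₂, hz⟩
    refine ⟨m₁ * m₂, Nat.mul_pos hm₁ hm₂, ?_⟩
    have : ((m₁ * m₂ : ℕ) : ℤ) • (y + z)
        = (m₂ : ℤ) • ((m₁ : ℤ) • y) + (m₁ : ℤ) • ((m₂ : ℤ) • z) := by
      push_cast
      rw [smul_add, smul_smul, smul_smul]
      ring_nf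
    rw [this]
    exact K'.add_mem (K'.smul_mem _ hy) (K'.smul_mem _ hz)
  · rintro q y - ⟨m, hm, hy⟩
    refine ⟨q.den * m, Nat.mul_pos q.den_pos hm, ?_⟩
    have key : ((q.den * m : ℕ) : ℤ) • (q • y) = q.num • ((m : ℤ) • y) := by
      rw [← Int.cast_smul_eq_zsmul ℚ ((q.den * m : ℕ) : ℤ) (q • y),
          ← Int.cast_smul_eq_zsmul ℚ q.num ((m : ℤ) • y),
          ← Int.cast_smul_eq_zsmul ℚ (m : ℤ) y, smul_smul, smul_smul]
      congr 1
      have hq : (q.den : ℚ) * q = (q.num : ℚ) := Rat.den_mul_eq_num q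
      push_cast
      rw [mul_comm ((q.den : ℚ)) ((m : ℚ)), mul_assoc, hq]
      ring
    rw [key]
    exact K'.smul_mem _ hy


lemma pi_prufer_int_div (n : ℕ) (p : Nat.Primes) :
    ∀ (x : Fin n → Prufer p) (m : ℤ), m ≠ 0 → ∃ y, m • y = x :=
  int_div_of_nat_div (fun x m hm => by
    choose y hy using fun i => prufer_div p m hm (x i)
    exact ⟨y, funext fun i => by simpa using hy i⟩)

lemma ds_int_div (n : ℕ) :
    ∀ (x : DirectSum Nat.Primes fun p => Fin n → Prufer p) (m : ℤ), m ≠ 0 →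
      ∃ y, m • y = x := by
  intro x
  induction x using DirectSum.induction_on with
  | zero => exact fun m _ => ⟨0, smul_zero m⟩
  | of p v =>
    intro m hm
    obtain ⟨w, hw⟩ := pi_prufer_int_div n p v m hm
    exact ⟨DirectSum.of _ p w, by
      rw [← map_zsmul (DirectSum.of (fun p => Fin n → Prufer p) p) m w, hw]⟩
  | add x y hx hy =>
    intro m hm
    obtain ⟨y1, h1⟩ := hx m hm
    obtain ⟨y2, h2⟩ := hy m hm
    exact ⟨y1 + y2, by rw [smul_add, h1, h2]⟩


/-- Every countable abelian group containing no copy of `(ℤ/pℤ)^{n+1}` for any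
prime `p` embeds into `ℚ^{(ℕ)} ⊕ ⨁_p ℤ(p^∞)^{k_p}` with all `k_p ≤ n`. -/
theorem embeds_into_divisible_of_no_large_elementary (n : ℕ)
    (A : Type*) [AddCommGroup A] [Countable A]
    (hA : ∀ p : Nat.Primes,
      ¬ ∃ f : (Fin (n + 1) → ZMod (p : ℕ)) →+ A, Function.Injective f) :
    ∃ k : Nat.Primes → ℕ, (∀ p, k p ≤ n) ∧
      ∃ f : A →+ ((ℕ →₀ ℚ) × DirectSum Nat.Primes fun p => Fin (k p) → Prufer p),
        Function.Injective f := by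
  classical
  haveI : Nonempty A := ⟨0⟩
  obtain ⟨enum, henum⟩ := exists_surjective_nat A
  -- free presentation of A
  let fA : (ℕ →₀ ℤ) →ₗ[ℤ] A := Finsupp.linearCombination ℤ enum
  have hfA : Function.Surjective fA := by
    intro a
    obtain ⟨m, hm⟩ := henum a
    exact ⟨Finsupp.single m 1, by simp [fA, Finsupp.linearCombination_single, hm]⟩
  let K : Submodule ℤ (ℕ →₀ ℤ) := LinearMap.ker fA
  let incl : (ℕ →₀ ℤ) →ₗ[ℤ] (ℕ →₀ ℚ) :=
    Finsupp.mapRange.linearMap (Int.castAddHom ℚ).toIntLinearMap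
  have hincl_apply : ∀ (x : ℕ →₀ ℤ) (k : ℕ), incl x k = ((x k : ℤ) : ℚ) := by
    intro x k
    simp [incl, Finsupp.mapRange.linearMap_apply, Finsupp.mapRange_apply]
  have hincl_inj : Function.Injective incl := by
    intro x y hxy
    ext k
    have := congrArg (fun g : (ℕ →₀ ℚ) => g k) hxy
    simp only [hincl_apply] at this
    exact_mod_cast this
  let U : Submodule ℚ (ℕ →₀ ℚ) :=
    Submodule.span ℚ ((K.map incl : Submodule ℤ (ℕ →₀ ℚ)) : Set (ℕ →₀ ℚ))
  let W := (ℕ →₀ ℚ) ⧸ U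
  let h0 : (ℕ →₀ ℤ) →+ W := U.mkQ.toAddMonoidHom.comp incl.toAddMonoidHom
  have h0ker : ∀ x : (ℕ →₀ ℤ), fA x = 0 → h0 x = 0 := by
    intro x hx
    have hmem : incl x ∈ U :=
      Submodule.subset_span (Submodule.mem_map.mpr ⟨x, LinearMap.mem_ker.mpr hx, rfl⟩)
    have h1 : U.mkQ (incl x) = 0 := by
      rw [Submodule.mkQ_apply, Submodule.Quotient.mk_eq_zero]
      exact hmem
    exact h1
  let pick : A → (ℕ →₀ ℤ) := fun a => (hfA a).choose
  have hpick : ∀ a, fA (pick a) = a := fun a => (hfA a).choose_spec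
  let g1 : A →+ W := AddMonoidHom.mk' (fun a => h0 (pick a)) (by
    intro a b
    have hker : fA (pick (a + b) - pick a - pick b) = 0 := by
      simp [map_sub, hpick]
    have h := h0ker _ hker
    rw [map_sub, map_sub, sub_sub, sub_eq_zero] at h
    exact h)
  have hg1 : ∀ a : A, g1 a = 0 → IsOfFinAddOrder a := by
    intro a ha
    have hx : incl (pick a) ∈ U := by
      have h1 : h0 (pick a) = 0 := ha
      have : U.mkQ (incl (pick a)) = 0 := h1
      rwa [Submodule.mkQ_apply, Submodule.Quotient.mk_eq_zero] at this
    obtain ⟨m, hm, hsm⟩ := exists_nat_smul_mem_of_mem_span_rat (K.map incl) _ hx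
    obtain ⟨y, hyK, hy⟩ := Submodule.mem_map.mp hsm
    have hy' : y = (m : ℤ) • pick a := by
      apply hincl_inj
      rw [hy, map_smul]
    rw [hy'] at hyK
    have h2 : fA ((m : ℤ) • pick a) = 0 := LinearMap.mem_ker.mp hyK
    rw [map_smul, hpick] at h2
    rw [isOfFinAddOrder_iff_nsmul_eq_zero]
    exact ⟨m, hm, by rwa [← natCast_zsmul]⟩
  -- embed W into ℕ →₀ ℚ
  haveI : Countable W := Quotient.countable
  let bW := Module.Free.chooseBasis ℚ W
  haveI : Countable (Module.Free.ChooseBasisIndex ℚ W) := bW.injective.countable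
  obtain ⟨j, hj⟩ := (countable_iff_exists_injective _).mp
    (inferInstance : Countable (Module.Free.ChooseBasisIndex ℚ W))
  let emb : W →ₗ[ℚ] (ℕ →₀ ℚ) :=
    (Finsupp.lmapDomain ℚ ℚ j) ∘ₗ (bW.repr : W ≃ₗ[ℚ] _).toLinearMap
  have hemb : Function.Injective emb := by
    intro x y hxy
    apply bW.repr.injective
    exact Finsupp.mapDomain_injective hj hxy
  -- the prime-component maps
  choose π hπ using fun p : Nat.Primes => exists_pi n p (hA p)
  set DS := DirectSum Nat.Primes (fun p => Fin n → Prufer p) with hDS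
  have hvanish : ∀ (a : A) (m : ℕ), 0 < m → m • a = 0 →
      ∀ p : Nat.Primes, ¬((p : ℕ) ∣ m) → π p a = 0 := by
    intro a m hm hma p hpm
    funext i
    have h1 : m • π p a = 0 := by rw [← map_nsmul, hma, map_zero]
    have h2 : m • (π p a i) = 0 := by
      have h2' := congrFun h1 i
      rwa [Pi.smul_apply, Pi.zero_apply] at h2'
    obtain ⟨k, hk⟩ := (mem_prufer p _).mp (π p a i).2
    have hk' : addOrderOf (π p a i) = (p : ℕ) ^ k := by
      rw [← addOrderOf_injective (Prufer p).subtype Subtype.coe_injective (π p a i)]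
      exact hk
    have hdvd : (p : ℕ) ^ k ∣ m := hk' ▸ addOrderOf_dvd_of_nsmul_eq_zero h2
    cases k with
    | zero =>
      have h3 : addOrderOf (π p a i) = 1 := by simpa using hk'
      simpa using AddMonoid.addOrderOf_eq_one_iff.mp h3
    | succ k' =>
      exact absurd (dvd_trans (dvd_pow_self (p : ℕ) (Nat.succ_ne_zero k')) hdvd) hpm
  have hkill : ∀ m : ℕ, 0 < m → ∀ a : A, m • a = 0 →
      (∀ p : Nat.Primes, (p : ℕ) ∣ m → π p a = 0) → a = 0 := by
    intro m
    induction m using Nat.strong_induction_on with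
    | _ m ih =>
      intro hm a hma hall
      rcases eq_or_lt_of_le (Nat.one_le_iff_ne_zero.mpr hm.ne') with h1 | h2
      · rw [← h1, one_nsmul] at hma
        exact hma
      · have hq := Nat.minFac_prime (by omega : m ≠ 1)
        set P : Nat.Primes := ⟨m.minFac, hq⟩ with hP
        have hb : (P : ℕ) • ((m / m.minFac) • a) = 0 := by
          rw [smul_smul, Nat.mul_div_cancel' (Nat.minFac_dvd m)]
          exact hma
        have hπP : π P ((m / m.minFac) • a) = 0 := by
          rw [map_nsmul, hall P (Nat.minFac_dvd m), smul_zero]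
        have hb0 : (m / m.minFac) • a = 0 := hπ P _ hb hπP
        exact ih (m / m.minFac) (Nat.div_lt_self hm hq.one_lt)
          (Nat.div_pos (Nat.minFac_le hm) (Nat.minFac_pos m)) a hb0
          (fun p hp => hall p (dvd_trans hp (Nat.div_dvd_of_dvd (Nat.minFac_dvd m))))
  -- support of the torsion decomposition
  let D : A → Finset Nat.Primes := fun a =>
    ((addOrderOf a).primeFactors.attach).map
      ⟨fun q : {x // x ∈ (addOrderOf a).primeFactors} =>
        (⟨(q : ℕ), Nat.prime_of_mem_primeFactors q.2⟩ : Nat.Primes),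
       fun x y h => Subtype.ext (congrArg (fun z : Nat.Primes => (z : ℕ)) h)⟩
  have hD : ∀ (a : A) (p : Nat.Primes),
      p ∈ D a ↔ (p : ℕ) ∈ (addOrderOf a).primeFactors := by
    intro a p
    constructor
    · intro hp
      obtain ⟨q, -, hq2⟩ := Finset.mem_map.mp hp
      have : (q : ℕ) = (p : ℕ) := congrArg Subtype.val hq2
      rw [← this]
      exact q.2
    · intro hp
      exact Finset.mem_map.mpr ⟨⟨(p : ℕ), hp⟩, Finset.mem_attach _ _, Subtype.ext rfl⟩
  let S : Finset Nat.Primes → A → DS := fun s a =>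
    ∑ p ∈ s, DirectSum.of (fun p : Nat.Primes => Fin n → Prufer p) p (π p a)
  have hstable : ∀ (a : A), IsOfFinAddOrder a → ∀ s : Finset Nat.Primes,
      D a ⊆ s → S s a = S (D a) a := by
    intro a ha s hsub
    refine (Finset.sum_subset hsub ?_).symm
    intro p _ hpD
    have hnot : ¬ ((p : ℕ) ∣ addOrderOf a) := by
      intro hdvd
      exact hpD ((hD a p).mpr (Nat.mem_primeFactors.mpr ⟨p.2, hdvd, ha.addOrderOf_pos.ne'⟩))
    rw [hvanish a (addOrderOf a) ha.addOrderOf_pos (addOrderOf_nsmul_eq_zero a) p hnot,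
      map_zero]
  set Tgrp : AddSubgroup A := AddCommGroup.torsion A with hTgrp
  have hmemT : ∀ x : Tgrp, IsOfFinAddOrder (x : A) := fun x => x.2
  let g2 : Tgrp →+ DS := AddMonoidHom.mk' (fun x => S (D (x : A)) (x : A)) (by
    intro a b
    have hab : ((a + b : Tgrp) : A) = (a : A) + (b : A) := rfl
    set s := (D ((a : A)) ∪ D ((b : A))) ∪ D ((a : A) + (b : A)) with hs
    have h1 : S (D ((a : A) + (b : A))) ((a : A) + (b : A)) = S s ((a : A) + (b : A)) := by
      refine (hstable _ ?_ s Finset.subset_union_right).symm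
      rw [← hab]
      exact hmemT (a + b)
    have h2 : S (D ((a : A))) ((a : A)) = S s ((a : A)) :=
      (hstable _ (hmemT a) s
        (fun x hx => Finset.mem_union_left _ (Finset.mem_union_left _ hx))).symm
    have h3 : S (D ((b : A))) ((b : A)) = S s ((b : A)) :=
      (hstable _ (hmemT b) s
        (fun x hx => Finset.mem_union_left _ (Finset.mem_union_right _ hx))).symm
    have hadd : S s ((a : A) + (b : A)) = S s ((a : A)) + S s ((b : A)) := by
      simp only [S]
      rw [← Finset.sum_add_distrib]
      refine Finset.sum_congr rfl ?_
      intro p _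
      rw [map_add, map_add]
    show S (D ((a + b : Tgrp) : A)) ((a + b : Tgrp) : A)
        = S (D ((a : A))) ((a : A)) + S (D ((b : A))) ((b : A))
    rw [hab, h1, h2, h3, hadd]
    )
  have hg2coe : ∀ x : Tgrp, g2 x = S (D (x : A)) (x : A) := fun x => rfl
  have hg2inj : ∀ x : Tgrp, g2 x = 0 → (x : A) = 0 := by
    intro x hx
    have hx' : ∀ p ∈ D (x : A), π p (x : A) = 0 := by
      intro p hp
      have heval := congrArg (fun z : DS => z p) hx
      have hsum : (S (D (x : A)) (x : A)) p = π p (x : A) := by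
        simp only [S]
        rw [DFinsupp.finset_sum_apply]
        rw [Finset.sum_eq_single p]
        · exact DirectSum.of_eq_same p _
        · intro q _ hqp
          exact DirectSum.of_eq_of_ne _ _ _ hqp.symm
        · intro hpD
          exact absurd hp hpD
      rw [← hsum]
      simpa [hg2coe] using heval
    refine hkill (addOrderOf (x : A)) (hmemT x).addOrderOf_pos (x : A)
      (addOrderOf_nsmul_eq_zero _) ?_
    intro p hdvd
    exact hx' p ((hD _ p).mpr
      (Nat.mem_primeFactors.mpr ⟨p.2, hdvd, (hmemT x).addOrderOf_pos.ne'⟩))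
  obtain ⟨g2', hg2'⟩ := extend_of_divisible (ds_int_div n) Tgrp g2
  refine ⟨fun _ => n, fun _ => le_rfl, (emb.toAddMonoidHom.comp g1).prod g2', ?_⟩
  rw [injective_iff_map_eq_zero]
  intro a ha
  have h1 : emb (g1 a) = 0 := congrArg Prod.fst ha
  have h2 : g2' a = 0 := congrArg Prod.snd ha
  have hg10 : g1 a = 0 := hemb (by rw [h1, map_zero])
  have haT : a ∈ Tgrp := by
    rw [hTgrp, AddCommGroup.mem_torsion]
    exact hg1 a hg10
  have hz : g2 ⟨a, haT⟩ = 0 := by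
    rw [← hg2' ⟨a, haT⟩]
    exact h2
  exact hg2inj ⟨a, haT⟩ hz
end
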